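/- Every normal (possibly unbounded) operator T on a Hilbert space H admits a decomposition T = A⁻¹B where A is a bounded, injective, self-adjoint operator, B is a bounded normal operator, and AB = BA. -/

import Mathlib

open LinearPMap
open scoped LinearPMap InnerProduct

variable {H : Type*} [NormedAddCommGroup H] [InnerProductSpace ℂ H] [CompleteSpace H]

/-- The natural domain of the composition `g ∘ f`: `{x ∈ dom f : f x ∈ dom g}`. -/
def pcompDomain (g f : H →ₗ.[ℂ] H) : Submodule ℂ H where
  carrier := {x | ∃ hx : x ∈ f.domain, f ⟨x, hx⟩ ∈ g.domain}
  add_mem' := by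
    rintro a b ⟨ha, ha'⟩ ⟨hb, hb'⟩
    refine ⟨add_mem ha hb, ?_⟩
    have h : f ⟨a + b, add_mem ha hb⟩ = f ⟨a, ha⟩ + f ⟨b, hb⟩ := f.map_add ⟨a, ha⟩ ⟨b, hb⟩
    rw [h]; exact add_mem ha' hb'
  zero_mem' := ⟨zero_mem _, by
    have h : f ⟨0, zero_mem _⟩ = 0 := f.map_zero
    rw [h]; exact zero_mem _⟩
  smul_mem' := by
    rintro c a ⟨ha, ha'⟩
    refine ⟨Submodule.smul_mem _ c ha, ?_⟩
    have h : f ⟨c • a, Submodule.smul_mem _ c ha⟩ = c • f ⟨a, ha⟩ := f.map_smul c ⟨a, ha⟩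
    rw [h]; exact Submodule.smul_mem _ c ha'

/-- Composition `g ∘ f` of unbounded operators, with its natural domain
`{x ∈ dom f : f x ∈ dom g}`. -/
noncomputable def pcomp (g f : H →ₗ.[ℂ] H) : H →ₗ.[ℂ] H :=
  g.comp (f.domRestrict (pcompDomain g f)) (by
    rintro ⟨x, hx⟩
    obtain ⟨h1, h2⟩ := hx.1
    have : f.domRestrict (pcompDomain g f) ⟨x, hx⟩ = f ⟨x, h1⟩ :=
      LinearPMap.domRestrict_apply rfl
    rw [this]; exact h2)

/-- The identity as an unbounded operator. -/
noncomputable def pid : H →ₗ.[ℂ] H := LinearMap.id.toPMap ⊤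

noncomputable example (T : H →ₗ.[ℂ] H) : H →ₗ.[ℂ] H := pid + pcomp T† T

set_option linter.unusedSectionVars false
section Aux

local notation "⟪" x ", " y "⟫" => @inner ℂ _ _ x y

lemma pmap_congr (f : H →ₗ.[ℂ] H) {x y : H} (hx : x ∈ f.domain) (hy : y ∈ f.domain)
    (h : x = y) : f ⟨x, hx⟩ = f ⟨y, hy⟩ := by subst h; rfl

lemma pmap_eq_apply {f g : H →ₗ.[ℂ] H} (h : f = g) {x : H} (hx : x ∈ f.domain)
    (hx' : x ∈ g.domain) : f ⟨x, hx⟩ = g ⟨x, hx'⟩ := by subst h; rfl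

lemma pmap_add' (f : H →ₗ.[ℂ] H) {x y : H} (hx : x ∈ f.domain) (hy : y ∈ f.domain)
    (hxy : x + y ∈ f.domain) : f ⟨x + y, hxy⟩ = f ⟨x, hx⟩ + f ⟨y, hy⟩ :=
  f.map_add ⟨x, hx⟩ ⟨y, hy⟩

lemma pmap_sub' (f : H →ₗ.[ℂ] H) {x y : H} (hx : x ∈ f.domain) (hy : y ∈ f.domain)
    (hxy : x - y ∈ f.domain) : f ⟨x - y, hxy⟩ = f ⟨x, hx⟩ - f ⟨y, hy⟩ :=
  f.map_sub ⟨x, hx⟩ ⟨y, hy⟩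

lemma pmap_smul' (f : H →ₗ.[ℂ] H) (c : ℂ) {x : H} (hx : x ∈ f.domain)
    (hcx : c • x ∈ f.domain) : f ⟨c • x, hcx⟩ = c • f ⟨x, hx⟩ :=
  f.map_smul c ⟨x, hx⟩

lemma pmap_zero' (f : H →ₗ.[ℂ] H) (h : (0 : H) ∈ f.domain) : f ⟨0, h⟩ = 0 := f.map_zero

lemma mem_pcomp_iff {g f : H →ₗ.[ℂ] H} {x : H} :
    x ∈ (pcomp g f).domain ↔ ∃ hx : x ∈ f.domain, f ⟨x, hx⟩ ∈ g.domain := by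
  constructor
  · rintro hx
    exact hx.1
  · rintro ⟨hx, hx2⟩
    exact ⟨⟨hx, hx2⟩, hx⟩

lemma pcomp_apply' {g f : H →ₗ.[ℂ] H} {x : H} (hmem : x ∈ (pcomp g f).domain)
    (hx : x ∈ f.domain) (hx2 : f ⟨x, hx⟩ ∈ g.domain) :
    pcomp g f ⟨x, hmem⟩ = g ⟨f ⟨x, hx⟩, hx2⟩ := by
  show g.toFun _ = g.toFun _
  congr 1

end Aux

section Res

local notation "⟪" x ", " y "⟫" => @inner ℂ _ _ x y

/-- `w` solves `(1 + T†T) w = z`. -/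
def Res (T : H →ₗ.[ℂ] H) (z w : H) : Prop :=
  ∃ hw : w ∈ (pcomp T† T).domain, w + pcomp T† T ⟨w, hw⟩ = z

lemma res_exists (T : H →ₗ.[ℂ] H) (hclosed : T.IsClosed)
    (hdense : Dense (T.domain : Set H)) (z : H) : ∃ w, Res T z w := by
  classical
  set K := WithLp 2 (H × H) with hK
  let G : Submodule ℂ K := T.graph.comap (WithLp.linearEquiv 2 ℂ (H × H)).toLinearMap
  have hGmem : ∀ k : K, k ∈ G ↔ WithLp.equiv 2 (H × H) k ∈ T.graph := fun k => Iff.rfl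
  have hGclosed : IsClosed (G : Set K) := by
    have : (G : Set K) = (WithLp.equiv 2 (H × H)) ⁻¹' (T.graph : Set (H × H)) := rfl
    rw [this]
    exact IsClosed.preimage (WithLp.prod_continuous_ofLp 2 H H) hclosed
  haveI : CompleteSpace G := hGclosed.completeSpace_coe
  obtain ⟨y, hyG, o, hoG, hyo⟩ :=
    Submodule.exists_add_mem_mem_orthogonal (K := G) ((WithLp.equiv 2 (H × H)).symm (z, 0))
  rw [hGmem, LinearPMap.mem_graph_iff] at hyG
  obtain ⟨v, hv1, hv2⟩ := hyG
  have hz1 : z = y.fst + o.fst := by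
    have := congrArg (fun k : K => k.fst) hyo
    exact this
  have hz2 : (0 : H) = y.snd + o.snd := by
    have := congrArg (fun k : K => k.snd) hyo
    exact this
  have hofst : o.fst = z - (v : H) := by
    rw [hv1]; exact eq_sub_of_add_eq' hz1.symm
  have hosnd : o.snd = -T v := by
    rw [hv2]; exact eq_neg_of_add_eq_zero_right hz2.symm
  have horth : ∀ x : T.domain, ⟪T x, T v⟫ = ⟪(x : H), z - (v : H)⟫ := by
    intro x
    have hm : (WithLp.equiv 2 (H × H)).symm ((x : H), T x) ∈ G := by
      rw [hGmem]
      simp only [Equiv.apply_symm_apply]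
      exact T.mem_graph x
    have h0 : ⟪((WithLp.equiv 2 (H × H)).symm ((x : H), T x) : K), o⟫ = 0 :=
      (Submodule.mem_orthogonal G o).mp hoG _ hm
    rw [WithLp.prod_inner_apply] at h0
    change ⟪(x : H), o.fst⟫ + ⟪T x, o.snd⟫ = 0 at h0
    rw [hofst, hosnd,
      inner_neg_right] at h0
    have h0' : ⟪(x : H), z - (v : H)⟫ + -⟪T x, T v⟫ = 0 := h0
    linear_combination -h0'
  have hstar : ∀ x : T.domain, ⟪z - (v : H), (x : H)⟫ = ⟪T v, T x⟫ := fun x =>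
    calc ⟪z - (v : H), (x : H)⟫ = (starRingEnd ℂ) ⟪(x : H), z - (v : H)⟫ :=
          (inner_conj_symm _ _).symm
      _ = (starRingEnd ℂ) ⟪T x, T v⟫ := by rw [horth x]
      _ = ⟪T v, T x⟫ := inner_conj_symm _ _
  have hmemadj : T v ∈ (T†).domain :=
    LinearPMap.mem_adjoint_domain_of_exists _ ⟨z - (v : H), hstar⟩
  have hadj : (T†) ⟨T v, hmemadj⟩ = z - (v : H) :=
    LinearPMap.adjoint_apply_eq hdense _ hstar
  have hwmem : (v : H) ∈ (pcomp T† T).domain := mem_pcomp_iff.mpr ⟨v.2, hmemadj⟩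
  refine ⟨v, hwmem, ?_⟩
  rw [pcomp_apply' hwmem v.2 hmemadj]
  have : (T†) ⟨T ⟨(v : H), v.2⟩, hmemadj⟩ = z - (v : H) := hadj
  rw [this]
  abel

end Res

section Res2

local notation "⟪" x ", " y "⟫" => @inner ℂ _ _ x y

lemma res_add {T : H →ₗ.[ℂ] H} {z z' w w' : H} (h : Res T z w) (h' : Res T z' w') :
    Res T (z + z') (w + w') := by
  obtain ⟨hw, he⟩ := h
  obtain ⟨hw', he'⟩ := h'
  refine ⟨add_mem hw hw', ?_⟩
  rw [pmap_add' _ hw hw' (add_mem hw hw')]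
  rw [← he, ← he']
  abel

lemma res_smul {T : H →ₗ.[ℂ] H} (c : ℂ) {z w : H} (h : Res T z w) :
    Res T (c • z) (c • w) := by
  obtain ⟨hw, he⟩ := h
  refine ⟨Submodule.smul_mem _ c hw, ?_⟩
  rw [pmap_smul' _ c hw (Submodule.smul_mem _ c hw), ← he, smul_add]

/-- The basic inner-product identity: `⟪w, z⟫ = ‖w‖² + ‖Tw‖²` when `Res T z w`. -/
lemma res_inner {T : H →ₗ.[ℂ] H} (hdense : Dense (T.domain : Set H)) {z w : H}
    (h : Res T z w) (h1 : w ∈ T.domain) (h2 : T ⟨w, h1⟩ ∈ (T†).domain) :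
    ⟪w, z⟫ = (‖w‖ : ℂ) ^ 2 + (‖T ⟨w, h1⟩‖ : ℂ) ^ 2 := by
  obtain ⟨hw, he⟩ := h
  rw [pcomp_apply' hw h1 h2] at he
  have hT : ⟪w, (T†) ⟨T ⟨w, h1⟩, h2⟩⟫ = (‖T ⟨w, h1⟩‖ : ℂ) ^ 2 := by
    rw [← inner_conj_symm]
    rw [LinearPMap.adjoint_isFormalAdjoint hdense ⟨T ⟨w, h1⟩, h2⟩ ⟨w, h1⟩]
    rw [inner_self_eq_norm_sq_to_K]
    simp
  calc ⟪w, z⟫ = ⟪w, w + (T†) ⟨T ⟨w, h1⟩, h2⟩⟫ := by rw [he]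
    _ = ⟪w, w⟫ + ⟪w, (T†) ⟨T ⟨w, h1⟩, h2⟩⟫ := inner_add_right _ _ _
    _ = (‖w‖ : ℂ) ^ 2 + (‖T ⟨w, h1⟩‖ : ℂ) ^ 2 := by
        rw [inner_self_eq_norm_sq_to_K, hT]
        exact rfl

lemma res_unique {T : H →ₗ.[ℂ] H} (hdense : Dense (T.domain : Set H)) {z w w' : H}
    (h : Res T z w) (h' : Res T z w') : w = w' := by
  have hd : Res T 0 (w - w') := by
    have := res_add h (res_smul (-1 : ℂ) h')
    simpa [sub_eq_add_neg] using this
  have hmem := hd.choose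
  obtain ⟨h1, h2⟩ := mem_pcomp_iff.mp hmem
  have := res_inner hdense hd h1 h2
  rw [inner_zero_right] at this
  have hre := congrArg Complex.re this.symm
  simp only [Complex.add_re, Complex.zero_re] at hre
  have h1' : ‖w - w'‖ ^ 2 + ‖T ⟨w - w', h1⟩‖ ^ 2 = 0 := by
    have e1 : ((‖w - w'‖ : ℂ) ^ 2).re = ‖w - w'‖ ^ 2 := by
      norm_cast
    have e2 : ((‖T ⟨w - w', h1⟩‖ : ℂ) ^ 2).re = ‖T ⟨w - w', h1⟩‖ ^ 2 := by
      norm_cast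
    rw [e1, e2] at hre
    linarith
  have : ‖w - w'‖ = 0 := by nlinarith [norm_nonneg (w - w'), sq_nonneg ‖T ⟨w - w', h1⟩‖]
  have := norm_eq_zero.mp this
  exact sub_eq_zero.mp this

lemma res_norm {T : H →ₗ.[ℂ] H} (hdense : Dense (T.domain : Set H)) {z w : H}
    (h : Res T z w) : ‖w‖ ≤ ‖z‖ := by
  have hmem := h.choose
  obtain ⟨h1, h2⟩ := mem_pcomp_iff.mp hmem
  have hi := res_inner hdense h h1 h2
  have hre : ‖w‖ ^ 2 + ‖T ⟨w, h1⟩‖ ^ 2 = (⟪w, z⟫).re := by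
    rw [hi]; norm_cast
  have hb : (⟪w, z⟫).re ≤ ‖w‖ * ‖z‖ := by
    calc (⟪w, z⟫).re ≤ ‖⟪w, z⟫‖ := Complex.re_le_norm _
      _ ≤ ‖w‖ * ‖z‖ := norm_inner_le_norm _ _
  nlinarith [norm_nonneg w, norm_nonneg z, sq_nonneg ‖T ⟨w, h1⟩‖, sq_nonneg (‖w‖ - ‖z‖)]

lemma res_norm_T {T : H →ₗ.[ℂ] H} (hdense : Dense (T.domain : Set H)) {z w : H}
    (h : Res T z w) (h1 : w ∈ T.domain) : ‖T ⟨w, h1⟩‖ ≤ ‖z‖ := by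
  have hmem := h.choose
  obtain ⟨h1x, h2⟩ := mem_pcomp_iff.mp hmem
  have hi := res_inner hdense h h1 h2
  have hre : ‖w‖ ^ 2 + ‖T ⟨w, h1⟩‖ ^ 2 = (⟪w, z⟫).re := by
    rw [hi]; norm_cast
  have hb : (⟪w, z⟫).re ≤ ‖w‖ * ‖z‖ := by
    calc (⟪w, z⟫).re ≤ ‖⟪w, z⟫‖ := Complex.re_le_norm _
      _ ≤ ‖w‖ * ‖z‖ := norm_inner_le_norm _ _
  have hw : ‖w‖ ≤ ‖z‖ := res_norm hdense h
  nlinarith [norm_nonneg w, norm_nonneg z, norm_nonneg (T ⟨w, h1⟩), sq_nonneg ‖w‖,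
    sq_nonneg (‖T ⟨w, h1⟩‖ - ‖z‖), sq_nonneg (‖T ⟨w, h1⟩‖ + ‖z‖)]

end Res2

local notation "⟪" x ", " y "⟫" => @inner ℂ _ _ x y

set_option maxHeartbeats 2000000 in
theorem stmt10 (T : H →ₗ.[ℂ] H) (hclosed : T.IsClosed)
    (hdense : Dense (T.domain : Set H)) (hnormal : pcomp T† T = pcomp T T†) :
    ∃ A B : H →L[ℂ] H, Function.Injective A ∧ IsSelfAdjoint A ∧
      (ContinuousLinearMap.adjoint B ∘L B = B ∘L ContinuousLinearMap.adjoint B) ∧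
      A ∘L B = B ∘L A ∧
      (∀ x : H, x ∈ T.domain ↔ B x ∈ Set.range A) ∧
      (∀ x : T.domain, A (T x) = B (x : H)) := by
  classical
  choose f hf using res_exists T hclosed hdense
  have hmemf : ∀ z, f z ∈ (pcomp T† T).domain := fun z => (hf z).choose
  have heqf : ∀ z, f z + pcomp T† T ⟨f z, hmemf z⟩ = z := fun z => (hf z).choose_spec
  have huniq : ∀ z w, Res T z w → f z = w := fun z w h => res_unique hdense (hf z) h
  have h1 : ∀ z, f z ∈ T.domain := fun z => (mem_pcomp_iff.mp (hmemf z)).choose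
  have h2 : ∀ z, T ⟨f z, h1 z⟩ ∈ (T†).domain :=
    fun z => (mem_pcomp_iff.mp (hmemf z)).choose_spec
  have heqf' : ∀ z, f z + (T†) ⟨T ⟨f z, h1 z⟩, h2 z⟩ = z := fun z => by
    have := heqf z
    rwa [pcomp_apply' (hmemf z) (h1 z) (h2 z)] at this
  have hST : ∀ z, (T†) ⟨T ⟨f z, h1 z⟩, h2 z⟩ = z - f z :=
    fun z => eq_sub_of_add_eq' (heqf' z)
  have hmemf' : ∀ z, f z ∈ (pcomp T T†).domain := fun z => hnormal ▸ hmemf z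
  have h1' : ∀ z, f z ∈ (T†).domain := fun z => (mem_pcomp_iff.mp (hmemf' z)).choose
  have h2' : ∀ z, (T†) ⟨f z, h1' z⟩ ∈ T.domain :=
    fun z => (mem_pcomp_iff.mp (hmemf' z)).choose_spec
  have hTS : ∀ z, T ⟨(T†) ⟨f z, h1' z⟩, h2' z⟩ = z - f z := fun z => by
    rw [← pcomp_apply' (hmemf' z) (h1' z) (h2' z),
      ← pmap_eq_apply hnormal (hmemf z) (hmemf' z),
      pcomp_apply' (hmemf z) (h1 z) (h2 z)]
    exact hST z
  -- linearity of f
  have hfadd : ∀ z z', f (z + z') = f z + f z' := fun z z' =>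
    huniq _ _ (res_add (hf z) (hf z'))
  have hfsmul : ∀ (c : ℂ) z, f (c • z) = c • f z := fun c z =>
    huniq _ _ (res_smul c (hf z))
  -- the operator A
  let A₀ : H →ₗ[ℂ] H := { toFun := f, map_add' := hfadd, map_smul' := hfsmul }
  let A : H →L[ℂ] H := A₀.mkContinuous 1 (fun z => by
    show ‖f z‖ ≤ 1 * ‖z‖
    rw [one_mul]
    exact res_norm hdense (hf z))
  have hAapp : ∀ z, A z = f z := fun z => rfl
  -- the operator B
  let B₀ : H →ₗ[ℂ] H :=
    { toFun := fun z => T ⟨f z, h1 z⟩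
      map_add' := fun z z' => by
        calc T ⟨f (z + z'), h1 _⟩ = T ⟨f z + f z', add_mem (h1 z) (h1 z')⟩ :=
              pmap_congr T _ _ (hfadd z z')
          _ = T ⟨f z, h1 z⟩ + T ⟨f z', h1 z'⟩ := pmap_add' T _ _ _
      map_smul' := fun c z => by
        simp only [RingHom.id_apply]
        calc T ⟨f (c • z), h1 _⟩ = T ⟨c • f z, Submodule.smul_mem _ c (h1 z)⟩ :=
              pmap_congr T _ _ (hfsmul c z)
          _ = c • T ⟨f z, h1 z⟩ := pmap_smul' T c _ _ }
  let B : H →L[ℂ] H := B₀.mkContinuous 1 (fun z => by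
    show ‖T ⟨f z, h1 z⟩‖ ≤ 1 * ‖z‖
    rw [one_mul]
    exact res_norm_T hdense (hf z) (h1 z))
  have hBapp : ∀ z, B z = T ⟨f z, h1 z⟩ := fun z => rfl
  -- the operator B' = T† ∘ A, candidate adjoint of B
  let B'₀ : H →ₗ[ℂ] H :=
    { toFun := fun z => (T†) ⟨f z, h1' z⟩
      map_add' := fun z z' => by
        calc (T†) ⟨f (z + z'), h1' _⟩ = (T†) ⟨f z + f z', add_mem (h1' z) (h1' z')⟩ :=
              pmap_congr (T†) _ _ (hfadd z z')
          _ = (T†) ⟨f z, h1' z⟩ + (T†) ⟨f z', h1' z'⟩ := pmap_add' (T†) _ _ _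
      map_smul' := fun c z => by
        simp only [RingHom.id_apply]
        calc (T†) ⟨f (c • z), h1' _⟩ = (T†) ⟨c • f z, Submodule.smul_mem _ c (h1' z)⟩ :=
              pmap_congr (T†) _ _ (hfsmul c z)
          _ = c • (T†) ⟨f z, h1' z⟩ := pmap_smul' (T†) c _ _ }
  let B' : H →L[ℂ] H := B'₀.mkContinuous 2 (fun z => by
    show ‖(T†) ⟨f z, h1' z⟩‖ ≤ 2 * ‖z‖
    have hid : ⟪(T†) ⟨f z, h1' z⟩, (T†) ⟨f z, h1' z⟩⟫ = ⟪f z, z - f z⟫ := by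
      calc ⟪(T†) ⟨f z, h1' z⟩, (T†) ⟨f z, h1' z⟩⟫
          = ⟪f z, T ⟨(T†) ⟨f z, h1' z⟩, h2' z⟩⟫ :=
            LinearPMap.adjoint_isFormalAdjoint hdense ⟨f z, h1' z⟩ ⟨(T†) ⟨f z, h1' z⟩, h2' z⟩
        _ = ⟪f z, z - f z⟫ := by rw [hTS z]
    have hb : ‖(T†) ⟨f z, h1' z⟩‖ ^ 2 ≤ ‖f z‖ * ‖z - f z‖ := by
      calc ‖(T†) ⟨f z, h1' z⟩‖ ^ 2
          = RCLike.re ⟪(T†) ⟨f z, h1' z⟩, (T†) ⟨f z, h1' z⟩⟫ := (inner_self_eq_norm_sq _).symm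
        _ = RCLike.re ⟪f z, z - f z⟫ := by rw [hid]
        _ ≤ ‖⟪f z, z - f z⟫‖ := RCLike.re_le_norm _
        _ ≤ ‖f z‖ * ‖z - f z‖ := norm_inner_le_norm _ _
    have hfz : ‖f z‖ ≤ ‖z‖ := res_norm hdense (hf z)
    have hzfz : ‖z - f z‖ ≤ 2 * ‖z‖ := by
      calc ‖z - f z‖ ≤ ‖z‖ + ‖f z‖ := norm_sub_le _ _
        _ ≤ 2 * ‖z‖ := by linarith
    have hsq : ‖(T†) ⟨f z, h1' z⟩‖ ^ 2 ≤ (2 * ‖z‖) ^ 2 := by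
      nlinarith [norm_nonneg z, norm_nonneg (f z)]
    nlinarith [norm_nonneg ((T†) ⟨f z, h1' z⟩), norm_nonneg z,
      sq_nonneg (‖(T†) ⟨f z, h1' z⟩‖ - 2 * ‖z‖), sq_nonneg (‖(T†) ⟨f z, h1' z⟩‖ + 2 * ‖z‖)])
  have hB'app : ∀ z, B' z = (T†) ⟨f z, h1' z⟩ := fun z => rfl
  -- commutation of f with T and T†
  have hTcomm : ∀ z (hz : z ∈ T.domain), f (T ⟨z, hz⟩) = T ⟨f z, h1 z⟩ := by
    intro z hz
    apply huniq
    have ht2 : (T†) ⟨T ⟨f z, h1 z⟩, h2 z⟩ ∈ T.domain := by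
      rw [hST z]; exact sub_mem hz (h1 z)
    have hmem : T ⟨f z, h1 z⟩ ∈ (pcomp T† T).domain := by
      rw [hnormal]; exact mem_pcomp_iff.mpr ⟨h2 z, ht2⟩
    have hmem2 : T ⟨f z, h1 z⟩ ∈ (pcomp T T†).domain := hnormal ▸ hmem
    refine ⟨hmem, ?_⟩
    have hval : pcomp T† T ⟨T ⟨f z, h1 z⟩, hmem⟩ = T ⟨z, hz⟩ - T ⟨f z, h1 z⟩ := by
      rw [pmap_eq_apply hnormal hmem hmem2, pcomp_apply' hmem2 (h2 z) ht2]
      calc T ⟨(T†) ⟨T ⟨f z, h1 z⟩, h2 z⟩, ht2⟩ = T ⟨z - f z, sub_mem hz (h1 z)⟩ :=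
            pmap_congr T _ _ (hST z)
        _ = T ⟨z, hz⟩ - T ⟨f z, h1 z⟩ := pmap_sub' T hz (h1 z) _
    rw [hval]; abel
  have hScomm : ∀ z (hz : z ∈ (T†).domain), f ((T†) ⟨z, hz⟩) = (T†) ⟨f z, h1' z⟩ := by
    intro z hz
    apply huniq
    have ht2 : T ⟨(T†) ⟨f z, h1' z⟩, h2' z⟩ ∈ (T†).domain := by
      rw [hTS z]; exact sub_mem hz (h1' z)
    have hmem : (T†) ⟨f z, h1' z⟩ ∈ (pcomp T† T).domain :=
      mem_pcomp_iff.mpr ⟨h2' z, ht2⟩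
    refine ⟨hmem, ?_⟩
    rw [pcomp_apply' hmem (h2' z) ht2]
    calc (T†) ⟨f z, h1' z⟩ + (T†) ⟨T ⟨(T†) ⟨f z, h1' z⟩, h2' z⟩, ht2⟩
        = (T†) ⟨f z, h1' z⟩ + (T†) ⟨z - f z, sub_mem hz (h1' z)⟩ := by
          rw [pmap_congr (T†) ht2 (sub_mem hz (h1' z)) (hTS z)]
      _ = (T†) ⟨f z, h1' z⟩ + ((T†) ⟨z, hz⟩ - (T†) ⟨f z, h1' z⟩) := by
          rw [pmap_sub' (T†) hz (h1' z) _]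
      _ = (T†) ⟨z, hz⟩ := by abel
  -- injectivity of A
  have hA0 : ∀ z, A z = 0 → z = 0 := by
    intro z hz
    have hfz : f z = 0 := hz
    have h0 : pcomp T† T ⟨f z, hmemf z⟩ = 0 := by
      rw [pmap_congr _ (hmemf z) (zero_mem _) hfz]
      exact (pcomp T† T).map_zero
    rw [← heqf z, h0, add_zero]
    exact hfz
  have hAinj : Function.Injective A := by
    intro a b hab
    have : A (a - b) = 0 := by rw [_root_.map_sub, hab, sub_self]
    exact sub_eq_zero.mp (hA0 _ this)
  -- self-adjointness of A
  have hsa : ∀ z x, ⟪A z, x⟫ = ⟪z, A x⟫ := by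
    intro z x
    show ⟪f z, x⟫ = ⟪z, f x⟫
    have e1 : ⟪f z, x⟫ = ⟪f z, f x⟫ + ⟪T ⟨f z, h1 z⟩, T ⟨f x, h1 x⟩⟫ := by
      calc ⟪f z, x⟫ = ⟪f z, f x + (T†) ⟨T ⟨f x, h1 x⟩, h2 x⟩⟫ := by rw [heqf' x]
        _ = ⟪f z, f x⟫ + ⟪f z, (T†) ⟨T ⟨f x, h1 x⟩, h2 x⟩⟫ := inner_add_right _ _ _
        _ = ⟪f z, f x⟫ + ⟪T ⟨f z, h1 z⟩, T ⟨f x, h1 x⟩⟫ := by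
            congr 1
            calc ⟪f z, (T†) ⟨T ⟨f x, h1 x⟩, h2 x⟩⟫
                = (starRingEnd ℂ) ⟪(T†) ⟨T ⟨f x, h1 x⟩, h2 x⟩, f z⟫ :=
                  (inner_conj_symm _ _).symm
              _ = (starRingEnd ℂ) ⟪T ⟨f x, h1 x⟩, T ⟨f z, h1 z⟩⟫ :=
                  congrArg _ (LinearPMap.adjoint_isFormalAdjoint hdense
                    ⟨T ⟨f x, h1 x⟩, h2 x⟩ ⟨f z, h1 z⟩)
              _ = ⟪T ⟨f z, h1 z⟩, T ⟨f x, h1 x⟩⟫ := inner_conj_symm _ _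
    have e2 : ⟪z, f x⟫ = ⟪f z, f x⟫ + ⟪T ⟨f z, h1 z⟩, T ⟨f x, h1 x⟩⟫ := by
      calc ⟪z, f x⟫ = ⟪f z + (T†) ⟨T ⟨f z, h1 z⟩, h2 z⟩, f x⟫ := by rw [heqf' z]
        _ = ⟪f z, f x⟫ + ⟪(T†) ⟨T ⟨f z, h1 z⟩, h2 z⟩, f x⟫ := inner_add_left _ _ _
        _ = ⟪f z, f x⟫ + ⟪T ⟨f z, h1 z⟩, T ⟨f x, h1 x⟩⟫ := by
            congr 1
            exact LinearPMap.adjoint_isFormalAdjoint hdense ⟨T ⟨f z, h1 z⟩, h2 z⟩ ⟨f x, h1 x⟩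
    rw [e1, e2]
  have hAsa : IsSelfAdjoint A :=
    ContinuousLinearMap.isSelfAdjoint_iff'.mpr
      (((ContinuousLinearMap.eq_adjoint_iff A A).mpr hsa).symm)
  -- adjoint of B is B'
  have hBadj : ∀ x y, ⟪B' x, y⟫ = ⟪x, B y⟫ := by
    intro x y
    show ⟪(T†) ⟨f x, h1' x⟩, y⟫ = ⟪x, T ⟨f y, h1 y⟩⟫
    have t1 : ⟪(T†) ⟨f x, h1' x⟩, f y⟫ = ⟪f x, T ⟨f y, h1 y⟩⟫ :=
      LinearPMap.adjoint_isFormalAdjoint hdense ⟨f x, h1' x⟩ ⟨f y, h1 y⟩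
    have t2 : ⟪(T†) ⟨f x, h1' x⟩, (T†) ⟨T ⟨f y, h1 y⟩, h2 y⟩⟫
        = ⟪x, T ⟨f y, h1 y⟩⟫ - ⟪f x, T ⟨f y, h1 y⟩⟫ := by
      calc ⟪(T†) ⟨f x, h1' x⟩, (T†) ⟨T ⟨f y, h1 y⟩, h2 y⟩⟫
          = (starRingEnd ℂ) ⟪(T†) ⟨T ⟨f y, h1 y⟩, h2 y⟩, (T†) ⟨f x, h1' x⟩⟫ :=
            (inner_conj_symm _ _).symm
        _ = (starRingEnd ℂ) ⟪T ⟨f y, h1 y⟩, T ⟨(T†) ⟨f x, h1' x⟩, h2' x⟩⟫ :=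
            congrArg _ (LinearPMap.adjoint_isFormalAdjoint hdense
              ⟨T ⟨f y, h1 y⟩, h2 y⟩ ⟨(T†) ⟨f x, h1' x⟩, h2' x⟩)
        _ = (starRingEnd ℂ) ⟪T ⟨f y, h1 y⟩, x - f x⟫ := by rw [hTS x]
        _ = (starRingEnd ℂ) (⟪T ⟨f y, h1 y⟩, x⟫ - ⟪T ⟨f y, h1 y⟩, f x⟫) := by
            rw [inner_sub_right]
        _ = ⟪x, T ⟨f y, h1 y⟩⟫ - ⟪f x, T ⟨f y, h1 y⟩⟫ := by
            rw [_root_.map_sub, inner_conj_symm, inner_conj_symm]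
    calc ⟪(T†) ⟨f x, h1' x⟩, y⟫
        = ⟪(T†) ⟨f x, h1' x⟩, f y + (T†) ⟨T ⟨f y, h1 y⟩, h2 y⟩⟫ := by rw [heqf' y]
      _ = ⟪(T†) ⟨f x, h1' x⟩, f y⟫ + ⟪(T†) ⟨f x, h1' x⟩, (T†) ⟨T ⟨f y, h1 y⟩, h2 y⟩⟫ :=
          inner_add_right _ _ _
      _ = ⟪f x, T ⟨f y, h1 y⟩⟫ + (⟪x, T ⟨f y, h1 y⟩⟫ - ⟪f x, T ⟨f y, h1 y⟩⟫) := by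
          rw [t1, t2]
      _ = ⟪x, T ⟨f y, h1 y⟩⟫ := by ring
  have hadjB : ContinuousLinearMap.adjoint B = B' :=
    ((ContinuousLinearMap.eq_adjoint_iff B' B).mpr hBadj).symm
  -- B is normal
  have hBnormal : ContinuousLinearMap.adjoint B ∘L B = B ∘L ContinuousLinearMap.adjoint B := by
    rw [hadjB]
    ext z
    show B' (B z) = B (B' z)
    have e1 : B' (B z) = f z - f (f z) := by
      show (T†) ⟨f (T ⟨f z, h1 z⟩), h1' _⟩ = f z - f (f z)
      calc (T†) ⟨f (T ⟨f z, h1 z⟩), h1' _⟩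
          = (T†) ⟨T ⟨f (f z), h1 (f z)⟩, h2 (f z)⟩ :=
            pmap_congr (T†) _ _ (hTcomm (f z) (h1 z))
        _ = f z - f (f z) := hST (f z)
    have e2 : B (B' z) = f z - f (f z) := by
      show T ⟨f ((T†) ⟨f z, h1' z⟩), h1 _⟩ = f z - f (f z)
      calc T ⟨f ((T†) ⟨f z, h1' z⟩), h1 _⟩
          = T ⟨(T†) ⟨f (f z), h1' (f z)⟩, h2' (f z)⟩ :=
            pmap_congr T _ _ (hScomm (f z) (h1' z))
        _ = f z - f (f z) := hTS (f z)
    rw [e1, e2]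
  -- A and B commute
  have hABcomm : A ∘L B = B ∘L A := by
    ext z
    show A (B z) = B (A z)
    show f (T ⟨f z, h1 z⟩) = T ⟨f (f z), h1 (f z)⟩
    exact hTcomm (f z) (h1 z)
  -- the domain characterization
  have hdomain : ∀ x : H, x ∈ T.domain ↔ B x ∈ Set.range A := by
    intro x
    constructor
    · intro hx
      exact ⟨T ⟨x, hx⟩, hTcomm x hx⟩
    · rintro ⟨y, hy⟩
      have hy' : f y = T ⟨f x, h1 x⟩ := hy
      have hm : T ⟨f x, h1 x⟩ ∈ (pcomp T T†).domain := by
        rw [← hy']; exact hmemf' y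
      obtain ⟨m1, m2⟩ := mem_pcomp_iff.mp hm
      have hval : (T†) ⟨T ⟨f x, h1 x⟩, m1⟩ = x - f x := hST x
      have hxm : x - f x ∈ T.domain := hval ▸ m2
      have hxx : x = (x - f x) + f x := (sub_add_cancel x (f x)).symm
      rw [hxx]
      exact add_mem hxm (h1 x)
  exact ⟨A, B, hAinj, hAsa, hBnormal, hABcomm, hdomain, fun x => hTcomm x.1 x.2⟩
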